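/- Fix σ > 0 and let (W, U) be a correlated Brownian motion pair with dynamic correlation r. For the estimator γ̂_t of Eq. (3) and the corresponding variance estimators σ̂²_{t,W} and σ̂²_{t,U}, if c > a > 0 and b > 15, then for each fixed integer t ≥ 1 the variances Var(γ̂_t), Var(σ̂²_{t,W}) and Var(σ̂²_{t,U}) all converge to 0 as T → ∞. -/

import Mathlib

open MeasureTheory ProbabilityTheory Filter Finset

/-- A standard Brownian motion sampled at the integer times. -/
structure IsDiscreteBM {Ω : Type*} [MeasureSpace Ω] (X : ℕ → Ω → ℝ) : Prop where
  meas : ∀ t, Measurable (X t)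
  init : ∀ᵐ ω ∂(ℙ : Measure Ω), X 0 ω = 0
  incr : ∀ s t : ℕ, s ≤ t →
    Measure.map (fun ω => X t ω - X s ω) (ℙ : Measure Ω) = gaussianReal 0 ((t - s : ℕ) : NNReal)
  indep_incr : ∀ u : ℕ → ℕ, Monotone u →
    iIndepFun
      (fun i ω => X (u (i + 1)) ω - X (u i) ω) (ℙ : Measure Ω)

/-- Independence of two processes (as functions into `ℕ → ℝ`). -/
def ProcIndep {Ω : Type*} [MeasureSpace Ω] (A B : ℕ → Ω → ℝ) : Prop :=
  IndepFun (fun ω t => A t ω) (fun ω t => B t ω) (ℙ : Measure Ω)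

/-- A correlated Brownian motion pair with dynamic correlation `ρ`. -/
structure IsCorrBMPair {Ω : Type*} [MeasureSpace Ω] (ρ : ℕ → ℝ) (X Y : ℕ → Ω → ℝ) : Prop where
  bound : ∀ t, |ρ t| ≤ 1
  bmX : IsDiscreteBM X
  bmY : IsDiscreteBM Y
  rep : ∃ X1 Y1 : ℕ → Ω → ℝ, IsDiscreteBM X1 ∧ IsDiscreteBM Y1 ∧
    ProcIndep X1 Y ∧ ProcIndep Y1 X ∧
    (∀ t, ∀ᵐ ω ∂(ℙ : Measure Ω),
      X t ω = ρ t * Y t ω + Real.sqrt (1 - ρ t ^ 2) * X1 t ω) ∧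
    (∀ t, ∀ᵐ ω ∂(ℙ : Measure Ω),
      Y t ω = ρ t * X t ω + Real.sqrt (1 - ρ t ^ 2) * Y1 t ω)

/-- The Eq. (3) covariance estimator `γ̂_t` for a Geometric Brownian motion pair
`(e^{σW}, e^{σU})`; with `U := W` it is the variance estimator `σ̂²_{t,W}`. -/
noncomputable def gbmGammaEq3 {Ω : Type*} [MeasureSpace Ω] (σ a b c : ℝ) (W U : ℕ → Ω → ℝ)
    (T t : ℕ) (ω : Ω) : ℝ :=
  Real.exp (-(c * σ ^ 2 * T)) * ∑ k ∈ Finset.Icc 1 T,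
    (Real.exp (a * σ ^ 2 * k) *
        ((Real.exp (σ * W t ω) - Real.exp (σ ^ 2 * t / 2))
          * (Real.exp (σ * U t ω) - Real.exp (σ ^ 2 * t / 2)))
      - Real.exp (-(b * σ ^ 2 * k)) *
        ((Real.exp (σ * W k ω) - Real.exp (σ ^ 2 * k / 2))
          * (Real.exp (σ * U k ω) - Real.exp (σ ^ 2 * k / 2))))

/-- The dynamic correlation `ρ_t` of the Geometric Brownian motion pair
`(e^{σW}, e^{σU})` when `(W,U)` has dynamic correlation `r`. -/
noncomputable def gbmCorr (σ : ℝ) (r : ℕ → ℝ) (t : ℕ) : ℝ :=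
  (Real.exp (r t * σ ^ 2 * t) - 1) / (Real.exp (σ ^ 2 * t) - 1)


section AuxLemmas
open NNReal ENNReal Real

lemma enn_exp_aux (x : ℝ) : ‖Real.exp x‖ₑ = ENNReal.ofReal (Real.exp x) := by
  rw [← ofReal_norm_eq_enorm, Real.norm_eq_abs, abs_of_pos (Real.exp_pos _)]

lemma aux_tendsto_nat_exp {d : ℝ} (hd : 0 < d) :
    Tendsto (fun T : ℕ => (T : ℝ) * Real.exp (-(d * T))) atTop (nhds 0) := by
  have h1 : Tendsto (fun x : ℝ => x * Real.exp (-x)) atTop (nhds 0) := by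
    simpa using Real.tendsto_pow_mul_exp_neg_atTop_nhds_zero 1
  have h2 : Tendsto (fun T : ℕ => d * (T : ℝ)) atTop atTop :=
    (tendsto_natCast_atTop_atTop).const_mul_atTop hd
  have h3 := (h1.comp h2).const_mul (1 / d)
  rw [mul_zero] at h3
  refine h3.congr fun T => ?_
  simp only [Function.comp_apply]
  field_simp

lemma meas_enn_exp_mul (l : ℝ) : Measurable fun x : ℝ => ENNReal.ofReal (Real.exp (l * x)) :=
  ENNReal.measurable_ofReal.comp (Real.measurable_exp.comp (measurable_const_mul l))

lemma lintegral_exp_gaussianReal (v : ℝ≥0) (l : ℝ) :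
    ∫⁻ x, ENNReal.ofReal (Real.exp (l * x)) ∂gaussianReal 0 v
      = ENNReal.ofReal (Real.exp (v * l ^ 2 / 2)) := by
  rcases eq_or_ne v 0 with hv | hv
  · subst hv
    rw [gaussianReal_zero_var, lintegral_dirac' _ (meas_enn_exp_mul l)]
    simp
  · have hv' : (0:ℝ) < v := by positivity
    rw [gaussianReal_of_var_ne_zero _ hv,
      lintegral_withDensity_eq_lintegral_mul _ (measurable_gaussianPDF _ _) (meas_enn_exp_mul l)]
    have hpt : ∀ x : ℝ, (gaussianPDF 0 v * fun x => ENNReal.ofReal (Real.exp (l * x))) x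
        = ENNReal.ofReal (Real.exp (v * l ^ 2 / 2)) * gaussianPDF (v * l) v x := by
      intro x
      simp only [Pi.mul_apply, gaussianPDF, ← ENNReal.ofReal_mul (gaussianPDFReal_nonneg _ _ _),
        ← ENNReal.ofReal_mul (Real.exp_nonneg _)]
      congr 1
      unfold gaussianPDFReal
      have hv0 : (v:ℝ) ≠ 0 := ne_of_gt hv'
      have hE : -(x - 0) ^ 2 / (2 * (v:ℝ)) + l * x
          = (v:ℝ) * l ^ 2 / 2 + -(x - (v:ℝ) * l) ^ 2 / (2 * (v:ℝ)) := by
        field_simp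
        ring
      rw [mul_assoc, ← Real.exp_add, hE, Real.exp_add]
      ring
    simp_rw [hpt]
    rw [lintegral_const_mul _ (measurable_gaussianPDF _ _), lintegral_gaussianPDF_eq_one _ hv,
      mul_one]

variable {Ω : Type*} [MeasureSpace Ω]

lemma IsDiscreteBM.map_eq {X : ℕ → Ω → ℝ} (hX : IsDiscreteBM X) (k : ℕ) :
    Measure.map (X k) (ℙ : Measure Ω) = gaussianReal 0 (k : NNReal) := by
  have h1 := hX.incr 0 k (Nat.zero_le k)
  have h2 : (fun ω => X k ω - X 0 ω) =ᵐ[(ℙ : Measure Ω)] X k := by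
    filter_upwards [hX.init] with ω hω
    simp [hω]
  rw [← Measure.map_congr h2, h1, Nat.sub_zero]

lemma IsDiscreteBM.lintegral_exp {X : ℕ → Ω → ℝ} (hX : IsDiscreteBM X) (l : ℝ) (k : ℕ) :
    ∫⁻ ω, ENNReal.ofReal (Real.exp (l * X k ω)) ∂(ℙ : Measure Ω)
      = ENNReal.ofReal (Real.exp (k * l ^ 2 / 2)) := by
  have := lintegral_map (μ := (ℙ : Measure Ω)) (meas_enn_exp_mul l) (hX.meas k)
  rw [hX.map_eq k, lintegral_exp_gaussianReal] at this
  rw [← this]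
  simp

lemma IsDiscreteBM.eLpNorm_exp_four {X : ℕ → Ω → ℝ} (hX : IsDiscreteBM X) (σ : ℝ) (k : ℕ) :
    eLpNorm (fun ω => Real.exp (σ * X k ω)) 4 (ℙ : Measure Ω)
      = ENNReal.ofReal (Real.exp (2 * σ ^ 2 * k)) := by
  rw [eLpNorm_eq_lintegral_rpow_enorm_toReal (by norm_num) (by norm_num)]
  rw [show ((4:ℝ≥0∞)).toReal = (4:ℝ) by norm_num]
  have h1 : ∀ ω, ‖Real.exp (σ * X k ω)‖ₑ ^ (4 : ℝ)
      = ENNReal.ofReal (Real.exp ((4 * σ) * X k ω)) := by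
    intro ω
    rw [← ofReal_norm_eq_enorm, Real.norm_eq_abs, abs_of_pos (Real.exp_pos _),
      ENNReal.ofReal_rpow_of_pos (Real.exp_pos _), ← Real.exp_mul]
    ring_nf
  simp_rw [h1]
  rw [hX.lintegral_exp (4 * σ) k,
    ENNReal.ofReal_rpow_of_pos (Real.exp_pos _), ← Real.exp_mul]
  congr 1
  ring

variable [IsProbabilityMeasure (ℙ : Measure Ω)]

lemma IsDiscreteBM.eLpNorm_centered_le {X : ℕ → Ω → ℝ} (hX : IsDiscreteBM X) (σ : ℝ) (k : ℕ) :
    eLpNorm (fun ω => Real.exp (σ * X k ω) - Real.exp (σ ^ 2 * k / 2)) 4 (ℙ : Measure Ω)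
      ≤ ENNReal.ofReal (2 * Real.exp (2 * σ ^ 2 * k)) := by
  have hmeas : AEStronglyMeasurable (fun ω => Real.exp (σ * X k ω)) (ℙ : Measure Ω) :=
    (Real.measurable_exp.comp ((hX.meas k).const_mul σ)).aestronglyMeasurable
  refine (eLpNorm_sub_le (p := 4) hmeas aestronglyMeasurable_const (by norm_num)).trans ?_
  rw [hX.eLpNorm_exp_four σ k,
    eLpNorm_const _ (by norm_num) (IsProbabilityMeasure.ne_zero _), measure_univ, ENNReal.one_rpow,
    mul_one, enn_exp_aux, ← ENNReal.ofReal_add (Real.exp_nonneg _) (Real.exp_nonneg _)]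
  apply ENNReal.ofReal_le_ofReal
  have h0 : (0:ℝ) ≤ σ ^ 2 * k := by positivity
  have : Real.exp (σ ^ 2 * k / 2) ≤ Real.exp (2 * σ ^ 2 * k) :=
    Real.exp_le_exp.mpr (by linarith)
  linarith

lemma prod_eLpNorm_le {X Y : ℕ → Ω → ℝ} (hX : IsDiscreteBM X) (hY : IsDiscreteBM Y)
    (σ : ℝ) (k : ℕ) :
    eLpNorm (fun ω => (Real.exp (σ * X k ω) - Real.exp (σ ^ 2 * k / 2))
        * (Real.exp (σ * Y k ω) - Real.exp (σ ^ 2 * k / 2))) 2 (ℙ : Measure Ω)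
      ≤ ENNReal.ofReal (4 * Real.exp (4 * σ ^ 2 * k)) := by
  have hu : AEStronglyMeasurable
      (fun ω => Real.exp (σ * X k ω) - Real.exp (σ ^ 2 * k / 2)) (ℙ : Measure Ω) :=
    ((Real.measurable_exp.comp ((hX.meas k).const_mul σ)).sub measurable_const).aestronglyMeasurable
  have hv : AEStronglyMeasurable
      (fun ω => Real.exp (σ * Y k ω) - Real.exp (σ ^ 2 * k / 2)) (ℙ : Measure Ω) :=
    ((Real.measurable_exp.comp ((hY.meas k).const_mul σ)).sub measurable_const).aestronglyMeasurable
  have hpqr : (1:ℝ≥0∞) / 2 = 1 / 4 + 1 / 4 := by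
    rw [ENNReal.div_add_div_same]
    rw [show (1+1 : ℝ≥0∞) = 2 by norm_num]
    rw [ENNReal.div_eq_div_iff] <;> norm_num
  refine (eLpNorm_le_eLpNorm_mul_eLpNorm_of_nnnorm (p := 4) (q := 4) (r := 2) hu hv (· * ·) 1
    (Eventually.of_forall fun ω => by rw [one_mul]; exact (nnnorm_mul _ _).le)
    (hpqr := ⟨by simpa only [one_div] using hpqr.symm⟩)).trans ?_
  rw [ENNReal.coe_one, one_mul]
  refine (mul_le_mul' (hX.eLpNorm_centered_le σ k) (hY.eLpNorm_centered_le σ k)).trans ?_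
  rw [← ENNReal.ofReal_mul (by positivity)]
  apply ENNReal.ofReal_le_ofReal
  have hmul : Real.exp (2 * σ ^ 2 * k) * Real.exp (2 * σ ^ 2 * k)
      = Real.exp (4 * σ ^ 2 * k) := by
    rw [← Real.exp_add]; congr 1; ring
  nlinarith [Real.exp_pos (2 * σ ^ 2 * (k:ℝ)), Real.exp_pos (4 * σ ^ 2 * (k:ℝ))]

end AuxLemmas

section MainAux
open NNReal ENNReal Real
variable {Ω : Type*} [MeasureSpace Ω] [IsProbabilityMeasure (ℙ : Measure Ω)]

lemma gamma_eLpNorm_le {X Y : ℕ → Ω → ℝ} (hX : IsDiscreteBM X) (hY : IsDiscreteBM Y)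
    {σ a b c : ℝ} (hσ : 0 < σ) (ha : 0 < a) (hb : 4 < b) (t T : ℕ) :
    eLpNorm (gbmGammaEq3 σ a b c X Y T t) 2 (ℙ : Measure Ω)
      ≤ ENNReal.ofReal (Real.exp (-(c * σ ^ 2 * T)) *
          (T * (Real.exp (a * σ ^ 2 * T) * (4 * Real.exp (4 * σ ^ 2 * t)) + 4))) := by
  classical
  set Z : ℕ → Ω → ℝ := fun k ω => (Real.exp (σ * X k ω) - Real.exp (σ ^ 2 * k / 2))
      * (Real.exp (σ * Y k ω) - Real.exp (σ ^ 2 * k / 2)) with hZdef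
  have measZ : ∀ k, Measurable (Z k) := fun k =>
    ((Real.measurable_exp.comp ((hX.meas k).const_mul σ)).sub measurable_const).mul
      ((Real.measurable_exp.comp ((hY.meas k).const_mul σ)).sub measurable_const)
  set g : ℕ → Ω → ℝ := fun k ω =>
    Real.exp (a * σ ^ 2 * k) * Z t ω - Real.exp (-(b * σ ^ 2 * k)) * Z k ω with hgdef
  have measg : ∀ k, Measurable (g k) := fun k =>
    ((measZ t).const_mul _).sub ((measZ k).const_mul _)
  have hγ : gbmGammaEq3 σ a b c X Y T t
      = Real.exp (-(c * σ ^ 2 * T)) • ∑ k ∈ Finset.Icc 1 T, g k := by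
    funext ω
    simp [gbmGammaEq3, hgdef, hZdef, Finset.sum_apply, Finset.mul_sum]
  rw [hγ, eLpNorm_const_smul, enn_exp_aux]
  have hterm : ∀ k ∈ Finset.Icc 1 T, eLpNorm (g k) 2 (ℙ : Measure Ω)
      ≤ ENNReal.ofReal (Real.exp (a * σ ^ 2 * T) * (4 * Real.exp (4 * σ ^ 2 * t)) + 4) := by
    intro k hk
    obtain ⟨hk1, hkT⟩ := Finset.mem_Icc.mp hk
    have h1 : (fun ω => Real.exp (a * σ ^ 2 * k) * Z t ω)
        = Real.exp (a * σ ^ 2 * k) • Z t := rfl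
    have h2 : (fun ω => Real.exp (-(b * σ ^ 2 * k)) * Z k ω)
        = Real.exp (-(b * σ ^ 2 * k)) • Z k := rfl
    have hsub : eLpNorm (g k) 2 (ℙ : Measure Ω)
        ≤ eLpNorm (fun ω => Real.exp (a * σ ^ 2 * k) * Z t ω) 2 (ℙ : Measure Ω)
          + eLpNorm (fun ω => Real.exp (-(b * σ ^ 2 * k)) * Z k ω) 2 (ℙ : Measure Ω) :=
      eLpNorm_sub_le ((measZ t).const_mul _).aestronglyMeasurable
        ((measZ k).const_mul _).aestronglyMeasurable one_le_two
    refine hsub.trans ?_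
    rw [h1, h2, eLpNorm_const_smul, eLpNorm_const_smul,
      enn_exp_aux, enn_exp_aux]
    have hA : ENNReal.ofReal (Real.exp (a * σ ^ 2 * k)) * eLpNorm (Z t) 2 (ℙ : Measure Ω)
        ≤ ENNReal.ofReal (Real.exp (a * σ ^ 2 * T) * (4 * Real.exp (4 * σ ^ 2 * t))) := by
      have hk' : Real.exp (a * σ ^ 2 * k) ≤ Real.exp (a * σ ^ 2 * T) := by
        apply Real.exp_le_exp.mpr
        have hkk : (k:ℝ) ≤ T := Nat.cast_le.mpr hkT
        exact mul_le_mul_of_nonneg_left hkk (by positivity)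
      refine (mul_le_mul' (ENNReal.ofReal_le_ofReal hk') (prod_eLpNorm_le hX hY σ t)).trans ?_
      rw [← ENNReal.ofReal_mul (Real.exp_nonneg _)]
    have hB : ENNReal.ofReal (Real.exp (-(b * σ ^ 2 * k))) * eLpNorm (Z k) 2 (ℙ : Measure Ω)
        ≤ ENNReal.ofReal 4 := by
      refine le_trans (mul_le_mul_right (prod_eLpNorm_le hX hY σ k) _) ?_
      rw [← ENNReal.ofReal_mul (Real.exp_nonneg _)]
      apply ENNReal.ofReal_le_ofReal
      have hexp : Real.exp (-(b * σ ^ 2 * k)) * Real.exp (4 * σ ^ 2 * k)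
          = Real.exp ((4 - b) * (σ ^ 2 * k)) := by
        rw [← Real.exp_add]; congr 1; ring
      have hle1 : Real.exp ((4 - b) * (σ ^ 2 * k)) ≤ 1 := by
        rw [Real.exp_le_one_iff]
        have h1 : (0:ℝ) ≤ σ ^ 2 * k := by positivity
        nlinarith
      nlinarith [Real.exp_pos (-(b * σ ^ 2 * (k:ℝ)))]
    calc ENNReal.ofReal (Real.exp (a * σ ^ 2 * k)) * eLpNorm (Z t) 2 (ℙ : Measure Ω)
          + ENNReal.ofReal (Real.exp (-(b * σ ^ 2 * k))) * eLpNorm (Z k) 2 (ℙ : Measure Ω)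
        ≤ ENNReal.ofReal (Real.exp (a * σ ^ 2 * T) * (4 * Real.exp (4 * σ ^ 2 * t)))
          + ENNReal.ofReal 4 := add_le_add hA hB
      _ = ENNReal.ofReal (Real.exp (a * σ ^ 2 * T) * (4 * Real.exp (4 * σ ^ 2 * t)) + 4) := by
          rw [← ENNReal.ofReal_add (by positivity) (by norm_num)]
  have hsum : eLpNorm (∑ k ∈ Finset.Icc 1 T, g k) 2 (ℙ : Measure Ω)
      ≤ (T : ℝ≥0∞) * ENNReal.ofReal
          (Real.exp (a * σ ^ 2 * T) * (4 * Real.exp (4 * σ ^ 2 * t)) + 4) := by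
    refine (eLpNorm_sum_le (fun k _ => (measg k).aestronglyMeasurable) one_le_two).trans ?_
    refine (Finset.sum_le_card_nsmul _ _ _ hterm).trans ?_
    rw [Nat.card_Icc, nsmul_eq_mul]
    simp
  refine (mul_le_mul_right hsum _).trans ?_
  rw [← ENNReal.ofReal_natCast, ← ENNReal.ofReal_mul (by positivity),
    ← ENNReal.ofReal_mul (Real.exp_nonneg _)]

lemma gamma_variance_tendsto {X Y : ℕ → Ω → ℝ} (hX : IsDiscreteBM X) (hY : IsDiscreteBM Y)
    {σ a b c : ℝ} (hσ : 0 < σ) (ha : 0 < a) (hac : a < c) (hb : 15 < b) (t : ℕ) :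
    Tendsto (fun T => variance (gbmGammaEq3 σ a b c X Y T t) (ℙ : Measure Ω))
      atTop (nhds 0) := by
  classical
  set B : ℕ → ℝ := fun T => Real.exp (-(c * σ ^ 2 * T)) *
      (T * (Real.exp (a * σ ^ 2 * T) * (4 * Real.exp (4 * σ ^ 2 * t)) + 4)) with hBdef
  have hB0 : ∀ T, 0 ≤ B T := fun T => by positivity
  have hσ2 : (0:ℝ) < σ ^ 2 := pow_pos hσ 2
  have hBtend : Tendsto B atTop (nhds 0) := by
    have h1 := aux_tendsto_nat_exp (mul_pos (sub_pos.mpr hac) hσ2)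
    have h2 := aux_tendsto_nat_exp (mul_pos (ha.trans hac) hσ2)
    have h3 := ((h1.const_mul (4 * Real.exp (4 * σ ^ 2 * t))).add (h2.const_mul 4))
    rw [mul_zero, mul_zero, add_zero] at h3
    refine h3.congr fun T => ?_
    have hexp : Real.exp (-((c - a) * σ ^ 2 * T))
        = Real.exp (-(c * σ ^ 2 * T)) * Real.exp (a * σ ^ 2 * T) := by
      rw [← Real.exp_add]; congr 1; ring
    simp only [hBdef]
    rw [hexp]
    ring
  have hmeasγ : ∀ T, Measurable (gbmGammaEq3 σ a b c X Y T t) := by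
    intro T
    apply Measurable.const_mul
    apply Finset.measurable_sum
    intro k _
    exact (Measurable.const_mul
      (((Real.measurable_exp.comp ((hX.meas t).const_mul σ)).sub measurable_const).mul
        ((Real.measurable_exp.comp ((hY.meas t).const_mul σ)).sub measurable_const)) _).sub
      (Measurable.const_mul
      (((Real.measurable_exp.comp ((hX.meas k).const_mul σ)).sub measurable_const).mul
        ((Real.measurable_exp.comp ((hY.meas k).const_mul σ)).sub measurable_const)) _)
  have hvar : ∀ T, variance (gbmGammaEq3 σ a b c X Y T t) (ℙ : Measure Ω) ≤ B T ^ 2 := by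
    intro T
    set γ := gbmGammaEq3 σ a b c X Y T t with hγdef
    refine (variance_le_expectation_sq (hmeasγ T).aestronglyMeasurable).trans ?_
    have hint : (ℙ : Measure Ω)[γ ^ 2]
        = (∫⁻ ω, ENNReal.ofReal ((γ ω) ^ 2) ∂(ℙ : Measure Ω)).toReal := by
      have hpt : (∫ ω, (γ ^ 2) ω ∂(ℙ : Measure Ω)) = ∫ ω, (γ ω) ^ 2 ∂(ℙ : Measure Ω) := by
        simp only [Pi.pow_apply]
      rw [hpt, integral_eq_lintegral_of_nonneg_ae (Eventually.of_forall fun ω => sq_nonneg _)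
        (((hmeasγ T).pow_const 2).aestronglyMeasurable)]
    have hl : ∫⁻ ω, ENNReal.ofReal ((γ ω) ^ 2) ∂(ℙ : Measure Ω)
        = (eLpNorm γ 2 (ℙ : Measure Ω)) ^ 2 := by
      rw [eLpNorm_eq_lintegral_rpow_enorm_toReal (by norm_num) (by norm_num),
        show ((2:ℝ≥0∞)).toReal = (2:ℝ) by norm_num,
        ← ENNReal.rpow_natCast _ 2, ← ENNReal.rpow_mul]
      norm_num
      congr 1
      funext ω
      rw [← ofReal_norm_eq_enorm, ← ENNReal.ofReal_pow (norm_nonneg _)]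
      congr 1
      rw [Real.norm_eq_abs, sq_abs]
    have h2 := gamma_eLpNorm_le (σ := σ) (a := a) (b := b) (c := c) hX hY hσ ha (by linarith) t T
    have h3 : (eLpNorm γ 2 (ℙ : Measure Ω)) ^ 2 ≤ ENNReal.ofReal (B T) ^ 2 :=
      pow_le_pow_left' h2 2
    rw [hint, hl]
    calc ((eLpNorm γ 2 (ℙ : Measure Ω)) ^ 2).toReal
        ≤ (ENNReal.ofReal (B T) ^ 2).toReal :=
          ENNReal.toReal_mono (pow_ne_top ENNReal.ofReal_ne_top) h3
      _ = B T ^ 2 := by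
          rw [← ENNReal.ofReal_pow (hB0 T), ENNReal.toReal_ofReal (by positivity)]
  have hB2 : Tendsto (fun T => B T ^ 2) atTop (nhds 0) := by
    have := hBtend.mul hBtend
    rw [mul_zero] at this
    simpa [pow_two] using this
  exact tendsto_of_tendsto_of_tendsto_of_le_of_le tendsto_const_nhds hB2
    (fun T => variance_nonneg _ _) hvar

end MainAux
theorem statement9 {Ω : Type*} [MeasureSpace Ω] [IsProbabilityMeasure (ℙ : Measure Ω)]
    (σ : ℝ) (hσ : 0 < σ) (r : ℕ → ℝ) (W U : ℕ → Ω → ℝ) (h : IsCorrBMPair r W U)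
    (a b c : ℝ) (ha : 0 < a) (hac : a < c) (hb : 15 < b) (t : ℕ) (ht : 1 ≤ t) :
    Tendsto (fun T => variance (gbmGammaEq3 σ a b c W U T t) (ℙ : Measure Ω))
      atTop (nhds 0) ∧
    Tendsto (fun T => variance (gbmGammaEq3 σ a b c W W T t) (ℙ : Measure Ω))
      atTop (nhds 0) ∧
    Tendsto (fun T => variance (gbmGammaEq3 σ a b c U U T t) (ℙ : Measure Ω))
      atTop (nhds 0) := by
  exact ⟨gamma_variance_tendsto h.bmX h.bmY hσ ha hac hb t,
   gamma_variance_tendsto h.bmX h.bmX hσ ha hac hb t,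
   gamma_variance_tendsto h.bmY h.bmY hσ ha hac hb t⟩
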